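/- Every invertible complex n×n matrix A has a base matrix, i.e., there exists B ∈ Mat(n×n, ℂ) with exp(B) = A. -/

import Mathlib

open NormedSpace Finset

theorem aux_exp_one_add_nilpotent_comm {𝔸 : Type*} [NormedCommRing 𝔸] [NormedAlgebra ℂ 𝔸]
    [CompleteSpace 𝔸] (m : 𝔸) (k : ℕ) (hk : m ^ (k + 1) = 0) :
    ∃ c : 𝔸, exp c = 1 + m := by
  classical
  set L : ℝ → 𝔸 := fun t => ∑ j ∈ range k,
      ((-1 : ℂ) ^ j / (j + 1) * (t : ℂ) ^ (j + 1)) • m ^ (j + 1) with hLdef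
  set D : ℝ → 𝔸 := fun t => ∑ j ∈ range k,
      ((-1 : ℂ) ^ j * (t : ℂ) ^ j) • m ^ (j + 1) with hDdef
  have hLderiv : ∀ t : ℝ, HasDerivAt L (D t) t := by
    intro t
    refine HasDerivAt.fun_sum fun j _ => ?_
    have h1 : HasDerivAt (fun s : ℝ => ((s : ℂ)) ^ (j + 1))
        (((j : ℂ) + 1) * (t : ℂ) ^ j) t := by
      simpa using (hasDerivAt_pow (j + 1) ((t : ℝ) : ℂ)).comp_ofReal
    have h2 := ((h1.const_mul ((-1 : ℂ) ^ j / (j + 1))).smul_const (m ^ (j + 1)))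
    convert h2 using 2
    have : ((j : ℂ) + 1) ≠ 0 := Nat.cast_add_one_ne_zero j
    field_simp
  have key : ∀ t : ℝ, D t * (1 + (t : ℂ) • m) = m := by
    intro t
    have hterm : ∀ j ∈ range k,
        (((-1 : ℂ) ^ j * (t : ℂ) ^ j) • m ^ (j + 1)) * (1 + (t : ℂ) • m)
          = (fun j => ((-1 : ℂ) ^ j * (t : ℂ) ^ j) • m ^ (j + 1)) j
            - (fun j => ((-1 : ℂ) ^ j * (t : ℂ) ^ j) • m ^ (j + 1)) (j + 1) := by
      intro j _
      simp only [Algebra.smul_def, map_mul, map_pow, map_neg, map_one, pow_succ]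
      ring
    have := Finset.sum_range_sub'
      (fun j => ((-1 : ℂ) ^ j * (t : ℂ) ^ j) • m ^ (j + 1)) k
    calc D t * (1 + (t : ℂ) • m)
        = ∑ j ∈ range k, (((-1 : ℂ) ^ j * (t : ℂ) ^ j) • m ^ (j + 1)) * (1 + (t : ℂ) • m) := by
          rw [hDdef]; exact Finset.sum_mul ..
      _ = ∑ j ∈ range k, ((fun j => ((-1 : ℂ) ^ j * (t : ℂ) ^ j) • m ^ (j + 1)) j
            - (fun j => ((-1 : ℂ) ^ j * (t : ℂ) ^ j) • m ^ (j + 1)) (j + 1)) :=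
          Finset.sum_congr rfl hterm
      _ = ((-1 : ℂ) ^ 0 * (t : ℂ) ^ 0) • m ^ (0 + 1)
            - ((-1 : ℂ) ^ k * (t : ℂ) ^ k) • m ^ (k + 1) := this
      _ = m := by rw [hk]; simp
  set f : ℝ → 𝔸 := fun t => exp (-(L t)) * (1 + (t : ℂ) • m) with hfdef
  have hfderiv : ∀ t : ℝ, HasDerivAt f 0 t := by
    intro t
    have h1 : HasDerivAt (fun t : ℝ => exp (-(L t)))
        (exp (-(L t)) * -(D t)) t := by
      have hexp := (hasFDerivAt_exp (𝕂 := ℂ) (x := -(L t))).restrictScalars ℝ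
      have := hexp.comp_hasDerivAt t ((hLderiv t).neg)
      simpa [smul_eq_mul, Function.comp_def] using this
    have h2 : HasDerivAt (fun t : ℝ => 1 + (t : ℂ) • m) m t := by
      have := ((hasDerivAt_id ((t : ℝ) : ℂ)).comp_ofReal).smul_const m
      simpa using this.const_add 1
    have h3 := h1.mul h2
    convert h3 using 1
    · exact funext fun _ => rfl
    calc (0 : 𝔸) = exp (-(L t)) * -(D t * (1 + (t:ℂ) • m)) + exp (-(L t)) * m := by
          rw [key t]; ring
      _ = exp (-(L t)) * -(D t) * (1 + (t:ℂ) • m) + exp (-(L t)) * m := by ring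
  have hconst : f 1 = f 0 :=
    is_const_of_deriv_eq_zero (fun t => (hfderiv t).differentiableAt)
      (fun t => (hfderiv t).deriv) 1 0
  have hL0 : L 0 = 0 := by simp [hLdef]
  have hf0 : f 0 = 1 := by simp [hfdef, hL0, exp_zero]
  have h1 : exp (-(L 1)) * (1 + m) = 1 := by
    have := hconst.trans hf0
    simpa [hfdef] using this
  refine ⟨L 1, ?_⟩
  have hcomm : exp (L 1) * exp (-(L 1)) = 1 := by
    letI : NormedAlgebra ℚ 𝔸 := NormedAlgebra.restrictScalars ℚ ℂ 𝔸
    rw [← exp_add_of_commute (Commute.all _ _)]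
    simp [exp_zero]
  calc exp (L 1) = exp (L 1) * (exp (-(L 1)) * (1 + m)) := by rw [h1, mul_one]
    _ = (exp (L 1) * exp (-(L 1))) * (1 + m) := by ring
    _ = 1 + m := by rw [hcomm, one_mul]


open NormedSpace in
theorem aux_exp_one_add_nilpotent {n : ℕ} (M : Matrix (Fin n) (Fin n) ℂ)
    (hM : IsNilpotent M) : ∃ C : Matrix (Fin n) (Fin n) ℂ, exp C = 1 + M := by
  classical
  letI : SeminormedRing (Matrix (Fin n) (Fin n) ℂ) := Matrix.linftyOpSemiNormedRing
  letI : NormedRing (Matrix (Fin n) (Fin n) ℂ) := Matrix.linftyOpNormedRing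
  letI : NormedAlgebra ℂ (Matrix (Fin n) (Fin n) ℂ) := Matrix.linftyOpNormedAlgebra
  obtain ⟨k, hk⟩ := hM
  set R := Algebra.adjoin ℂ ({M} : Set (Matrix (Fin n) (Fin n) ℂ)) with hR
  letI : NormedCommRing R :=
    { (inferInstance : NormedRing R) with
      mul_comm := by
        rintro ⟨a, ha⟩ ⟨b, hb⟩
        have hcomm : Commute b a := by
          refine Algebra.commute_of_mem_adjoin_of_forall_mem_commute ha fun x hx => ?_
          rcases hx with rfl
          exact (Algebra.commute_of_mem_adjoin_singleton_of_commute hb (Commute.refl _)).symm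
        exact Subtype.ext hcomm.symm.eq }
  haveI : FiniteDimensional ℂ R := inferInstance
  haveI : @IsUniformAddGroup R PseudoMetricSpace.toUniformSpace _ := inferInstance
  haveI : @CompleteSpace R PseudoMetricSpace.toUniformSpace :=
    @FiniteDimensional.complete ℂ R _ _ _ PseudoMetricSpace.toUniformSpace _ _ _ _ _
  set m : R := ⟨M, Algebra.self_mem_adjoin_singleton ℂ M⟩ with hm
  have hmk : m ^ (k + 1) = 0 := by
    have : (↑(m ^ (k + 1)) : Matrix (Fin n) (Fin n) ℂ) = M ^ (k + 1) := by
      push_cast [hm]; rfl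
    apply Subtype.ext
    rw [this, pow_succ, hk, zero_mul]
    rfl
  obtain ⟨c, hc⟩ := aux_exp_one_add_nilpotent_comm m k hmk
  refine ⟨(c : Matrix (Fin n) (Fin n) ℂ), ?_⟩
  have hval : Continuous (R.val : R → Matrix (Fin n) (Fin n) ℂ) := continuous_subtype_val
  letI : NormedAlgebra ℚ R := NormedAlgebra.restrictScalars ℚ ℂ R
  have := map_exp R.val hval c
  rw [hc] at this
  exact this.symm.trans (by simp [hm])

theorem aux_single_eigenvalue {n : ℕ} (A : Matrix (Fin n) (Fin n) ℂ) (μ : ℂ) (hμ : μ ≠ 0)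
    (hN : IsNilpotent (A - μ • 1)) : ∃ B : Matrix (Fin n) (Fin n) ℂ, exp B = A := by
  classical
  letI : SeminormedRing (Matrix (Fin n) (Fin n) ℂ) := Matrix.linftyOpSemiNormedRing
  letI : NormedRing (Matrix (Fin n) (Fin n) ℂ) := Matrix.linftyOpNormedRing
  letI : NormedAlgebra ℂ (Matrix (Fin n) (Fin n) ℂ) := Matrix.linftyOpNormedAlgebra
  set M : Matrix (Fin n) (Fin n) ℂ := μ⁻¹ • (A - μ • 1) with hMdef
  have hMnil : IsNilpotent M := by
    obtain ⟨k, hk⟩ := hN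
    exact ⟨k, by rw [hMdef, smul_pow, hk, smul_zero]⟩
  obtain ⟨C, hC⟩ := aux_exp_one_add_nilpotent M hMnil
  refine ⟨(Complex.log μ) • 1 + C, ?_⟩
  have hcomm : Commute ((Complex.log μ) • (1 : Matrix (Fin n) (Fin n) ℂ)) C :=
    (Commute.one_left C).smul_left _
  rw [Matrix.exp_add_of_commute _ _ hcomm, hC]
  have h1 : exp ((Complex.log μ) • (1 : Matrix (Fin n) (Fin n) ℂ)) = μ • 1 := by
    rw [← Algebra.algebraMap_eq_smul_one]
    refine (map_exp (algebraMap ℂ (Matrix (Fin n) (Fin n) ℂ)) (continuous_algebraMap _ _)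
      (Complex.log μ)).symm.trans ?_
    rw [← Complex.exp_eq_exp_ℂ, Complex.exp_log hμ, Algebra.algebraMap_eq_smul_one]
  rw [h1, smul_mul_assoc, one_mul, smul_add, hMdef, smul_smul, mul_inv_cancel₀ hμ, one_smul]
  abel


set_option maxHeartbeats 1600000 in
theorem aux_main : ∀ n : ℕ, ∀ A : Matrix (Fin n) (Fin n) ℂ, IsUnit A →
    ∃ B : Matrix (Fin n) (Fin n) ℂ, exp B = A := by
  intro n
  induction n using Nat.strong_induction_on with
  | _ n IH =>
    intro A hA
    classical
    rcases Nat.eq_zero_or_pos n with rfl | hn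
    · exact ⟨0, Subsingleton.elim _ _⟩
    haveI : Nonempty (Fin n) := ⟨⟨0, hn⟩⟩
    set f : Module.End ℂ (Fin n → ℂ) := Matrix.toLinAlgEquiv' A with hfdef
    have hfA : LinearMap.toMatrixAlgEquiv' f = A :=
      LinearMap.toMatrixAlgEquiv'_toLinAlgEquiv' A
    have hfunit : IsUnit f := hA.map Matrix.toLinAlgEquiv'
    have hbij : Function.Bijective f := (Module.End.isUnit_iff f).mp hfunit
    obtain ⟨μ, hμ⟩ := Module.End.exists_eigenvalue f
    obtain ⟨v, hv⟩ := hμ.exists_hasEigenvector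
    have hμ0 : μ ≠ 0 := by
      rintro rfl
      apply hv.right
      apply hbij.injective
      rw [map_zero]
      simpa using hv.apply_eq_smul
    by_cases hnil : IsNilpotent (A - μ • 1)
    · exact aux_single_eigenvalue A μ hμ0 hnil
    set g : Module.End ℂ (Fin n → ℂ) := f - μ • 1 with hgdef
    have hgnil : ¬ IsNilpotent g := by
      intro hg
      apply hnil
      have : LinearMap.toMatrixAlgEquiv' g = A - μ • 1 := by
        rw [hgdef, map_sub, map_smul, map_one, hfA]
      exact this ▸ hg.map (LinearMap.toMatrixAlgEquiv'.toAlgHom :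
        Module.End ℂ (Fin n → ℂ) →ₐ[ℂ] Matrix (Fin n) (Fin n) ℂ)
    obtain ⟨k, hcompl, hk1⟩ :
        ∃ k, IsCompl (LinearMap.ker (g ^ k)) (LinearMap.range (g ^ k)) ∧ 1 ≤ k :=
      (g.eventually_isCompl_ker_pow_range_pow.and (Filter.eventually_ge_atTop 1)).exists
    set p := LinearMap.ker (g ^ k) with hpdef
    set q := LinearMap.range (g ^ k) with hqdef
    have hfg : Commute f (g ^ k) := by
      refine Commute.pow_right ?_ k
      rw [hgdef]
      exact (Commute.refl f).sub_right ((Commute.one_right f).smul_right μ)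
    have hp : ∀ x ∈ p, f x ∈ p := by
      intro x hx
      have hx0 : (g ^ k) x = 0 := hx
      have : (g ^ k) (f x) = f ((g ^ k) x) := by
        rw [← Module.End.mul_apply, ← Module.End.mul_apply, ← hfg.eq]
      simp only [hpdef, LinearMap.mem_ker, this, hx0, map_zero]
    have hq : ∀ x ∈ q, f x ∈ q := by
      rintro x ⟨y, rfl⟩
      refine ⟨f y, ?_⟩
      rw [← Module.End.mul_apply, ← hfg.eq, Module.End.mul_apply]
    set fp : Module.End ℂ p := f.restrict hp with hfpdef
    set fq : Module.End ℂ q := f.restrict hq with hfqdef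
    -- nontriviality
    have hpbot : p ≠ ⊥ := by
      have hvp : v ∈ p := by
        have hgv : g v = 0 := by
          have := hv.apply_eq_smul
          simp [hgdef, LinearMap.sub_apply, this, sub_eq_zero]
        obtain ⟨j, rfl⟩ := Nat.exists_eq_add_of_le hk1
        show (g ^ (1 + j)) v = 0
        rw [add_comm, pow_succ, Module.End.mul_apply, hgv, map_zero]
      exact fun h => hv.right (by simpa [h] using hvp)
    have hqbot : q ≠ ⊥ := by
      intro h
      apply hgnil
      exact ⟨k, LinearMap.range_eq_bot.mp h⟩
    haveI : Nontrivial p := Submodule.nontrivial_iff_ne_bot.mpr hpbot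
    haveI : Nontrivial q := Submodule.nontrivial_iff_ne_bot.mpr hqbot
    have hsum : Module.finrank ℂ p + Module.finrank ℂ q = n := by
      rw [Submodule.finrank_add_eq_of_isCompl hcompl]
      simp [Module.finrank_fin_fun]
    have hdp : 0 < Module.finrank ℂ p := Module.finrank_pos
    have hdq : 0 < Module.finrank ℂ q := Module.finrank_pos
    have hplt : Module.finrank ℂ p < n := by omega
    have hqlt : Module.finrank ℂ q < n := by omega
    -- restrictions are units
    have hfp_unit : IsUnit fp := by
      rw [Module.End.isUnit_iff]
      have hinj : Function.Injective fp := by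
        intro x y hxy
        apply Subtype.ext
        apply hbij.injective
        have hx := congrArg (Subtype.val) hxy
        simpa [hfpdef, LinearMap.restrict_coe_apply] using hx
      exact ⟨hinj, (LinearMap.injective_iff_surjective).mp hinj⟩
    have hfq_unit : IsUnit fq := by
      rw [Module.End.isUnit_iff]
      have hinj : Function.Injective fq := by
        intro x y hxy
        apply Subtype.ext
        apply hbij.injective
        have hx := congrArg (Subtype.val) hxy
        simpa [hfqdef, LinearMap.restrict_coe_apply] using hx
      exact ⟨hinj, (LinearMap.injective_iff_surjective).mp hinj⟩
    set bp := Module.finBasis ℂ p with hbpdef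
    set bq := Module.finBasis ℂ q with hbqdef
    set Ap := algEquivMatrix bp fp with hApdef
    set Aq := algEquivMatrix bq fq with hAqdef
    obtain ⟨Bp, hBp⟩ := IH _ hplt Ap (hfp_unit.map (algEquivMatrix bp))
    obtain ⟨Bq, hBq⟩ := IH _ hqlt Aq (hfq_unit.map (algEquivMatrix bq))
    set e : (p × q) ≃ₗ[ℂ] (Fin n → ℂ) := Submodule.prodEquivOfIsCompl p q hcompl with hedef
    set Φ : Matrix (Fin (Module.finrank ℂ p)) (Fin (Module.finrank ℂ p)) ℂ ×
          Matrix (Fin (Module.finrank ℂ q)) (Fin (Module.finrank ℂ q)) ℂ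
          →ₐ[ℂ] Matrix (Fin n) (Fin n) ℂ :=
      (LinearMap.toMatrixAlgEquiv' :
          Module.End ℂ (Fin n → ℂ) ≃ₐ[ℂ] Matrix (Fin n) (Fin n) ℂ).toAlgHom.comp
        (((e.conjAlgEquiv ℂ).toAlgHom).comp ((LinearMap.prodMapAlgHom ℂ p q).comp
          (((algEquivMatrix bp).symm.toAlgHom).prodMap ((algEquivMatrix bq).symm.toAlgHom))))
      with hΦdef
    have hΦcont : Continuous Φ := by
      have : Continuous Φ.toLinearMap := Φ.toLinearMap.continuous_of_finiteDimensional
      exact this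
    letI : SeminormedRing (Matrix (Fin n) (Fin n) ℂ) := Matrix.linftyOpSemiNormedRing
    letI : NormedRing (Matrix (Fin n) (Fin n) ℂ) := Matrix.linftyOpNormedRing
    letI : NormedAlgebra ℂ (Matrix (Fin n) (Fin n) ℂ) := Matrix.linftyOpNormedAlgebra
    letI : SeminormedRing (Matrix (Fin (Module.finrank ℂ p)) (Fin (Module.finrank ℂ p)) ℂ) :=
      Matrix.linftyOpSemiNormedRing
    letI : NormedRing (Matrix (Fin (Module.finrank ℂ p)) (Fin (Module.finrank ℂ p)) ℂ) :=
      Matrix.linftyOpNormedRing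
    letI : NormedAlgebra ℂ (Matrix (Fin (Module.finrank ℂ p)) (Fin (Module.finrank ℂ p)) ℂ) :=
      Matrix.linftyOpNormedAlgebra
    letI : SeminormedRing (Matrix (Fin (Module.finrank ℂ q)) (Fin (Module.finrank ℂ q)) ℂ) :=
      Matrix.linftyOpSemiNormedRing
    letI : NormedRing (Matrix (Fin (Module.finrank ℂ q)) (Fin (Module.finrank ℂ q)) ℂ) :=
      Matrix.linftyOpNormedRing
    letI : NormedAlgebra ℂ (Matrix (Fin (Module.finrank ℂ q)) (Fin (Module.finrank ℂ q)) ℂ) :=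
      Matrix.linftyOpNormedAlgebra
    letI : NormedAlgebra ℚ (Matrix (Fin n) (Fin n) ℂ) := Matrix.linftyOpNormedAlgebra
    letI : NormedAlgebra ℚ (Matrix (Fin (Module.finrank ℂ p)) (Fin (Module.finrank ℂ p)) ℂ) :=
      Matrix.linftyOpNormedAlgebra
    letI : NormedAlgebra ℚ (Matrix (Fin (Module.finrank ℂ q)) (Fin (Module.finrank ℂ q)) ℂ) :=
      Matrix.linftyOpNormedAlgebra
    have hexp_pair : exp ((Bp, Bq) :
        Matrix (Fin (Module.finrank ℂ p)) (Fin (Module.finrank ℂ p)) ℂ ×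
        Matrix (Fin (Module.finrank ℂ q)) (Fin (Module.finrank ℂ q)) ℂ) = (Ap, Aq) := by
      refine Prod.ext ?_ ?_
      · exact (Prod.fst_exp _).trans hBp
      · exact (Prod.snd_exp _).trans hBq
    have hconj : e.conjAlgEquiv ℂ (LinearMap.prodMap fp fq) = f := by
      apply LinearMap.ext
      intro w
      obtain ⟨z, rfl⟩ := e.surjective w
      have h1 : e.conjAlgEquiv ℂ (LinearMap.prodMap fp fq) (e z)
          = e ((LinearMap.prodMap fp fq) z) := by
        show e.conj (LinearMap.prodMap fp fq) (e z) = _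
        rw [LinearEquiv.conj_apply]
        simp
      rw [h1]
      rcases z with ⟨x, y⟩
      have he : ∀ w : p × q, e w = (w.1 : Fin n → ℂ) + (w.2 : Fin n → ℂ) := by
        intro w
        have := Submodule.coe_prodEquivOfIsCompl p q hcompl
        calc e w = (e : p × q →ₗ[ℂ] (Fin n → ℂ)) w := rfl
          _ = (p.subtype.coprod q.subtype) w := by rw [this]
          _ = _ := by simp [LinearMap.coprod_apply]
      rw [he, he]
      simp only [LinearMap.prodMap_apply]
      rw [LinearMap.restrict_coe_apply, LinearMap.restrict_coe_apply, map_add]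
    have hΦA : Φ (Ap, Aq) = A := by
      have h0 : (((algEquivMatrix bp).symm.toAlgHom).prodMap ((algEquivMatrix bq).symm.toAlgHom))
          (Ap, Aq) = (fp, fq) := by
        show ((algEquivMatrix bp).symm Ap, (algEquivMatrix bq).symm Aq) = (fp, fq)
        rw [hApdef, hAqdef, AlgEquiv.symm_apply_apply, AlgEquiv.symm_apply_apply]
      rw [hΦdef]
      simp only [AlgHom.comp_apply]
      rw [h0]
      show LinearMap.toMatrixAlgEquiv' (e.conjAlgEquiv ℂ ((LinearMap.prodMapAlgHom ℂ p q) (fp, fq))) = A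
      have : (LinearMap.prodMapAlgHom ℂ p q) (fp, fq) = LinearMap.prodMap fp fq := rfl
      rw [this, hconj, hfA]
    refine ⟨Φ (Bp, Bq), ?_⟩
    exact (map_exp Φ hΦcont (Bp, Bq)).symm.trans ((congrArg Φ hexp_pair).trans hΦA)

/-- every invertible complex `n×n` matrix `A` has a base matrix,
i.e. some `B` with `exp B = A`. -/
theorem exists_base_matrix (n : ℕ) (A : Matrix (Fin n) (Fin n) ℂ) (hA : IsUnit A) :
    ∃ B : Matrix (Fin n) (Fin n) ℂ, NormedSpace.exp B = A :=
  aux_main n A hA
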